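/- Let g ∈ C¹([0,1], ℝ) with g(0) = 0. Then ∫₀¹ |g(r)|² dr ≤ (1/2) ∫₀¹ |g'(r)|² (1 − r²) dr. -/

import Mathlib

open MeasureTheory Set

lemma cs_int {μ : Measure ℝ} [IsFiniteMeasure μ] {f : ℝ → ℝ}
    (hf : Integrable f μ) (hf2 : Integrable (fun t => f t ^ 2) μ) :
    (∫ t, f t ∂μ) ^ 2 ≤ (μ univ).toReal * ∫ t, f t ^ 2 ∂μ := by
  set M : ℝ := (μ univ).toReal with hM
  set I : ℝ := ∫ t, f t ∂μ with hI
  set J : ℝ := ∫ t, f t ^ 2 ∂μ with hJ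
  have hM0 : 0 ≤ M := ENNReal.toReal_nonneg
  rcases eq_or_lt_of_le hM0 with h | h
  · -- M = 0 : measure is zero
    have : μ = 0 := by
      have := (ENNReal.toReal_eq_zero_iff _).mp h.symm
      rcases this with h' | h'
      · exact Measure.measure_univ_eq_zero.mp h'
      · exact absurd h' (measure_ne_top μ univ)
    subst this
    simp [hI, hJ, ← h]
  · have key : 0 ≤ ∫ t, (M * f t - I) ^ 2 ∂μ := integral_nonneg fun t => sq_nonneg _
    have expand : ∫ t, (M * f t - I) ^ 2 ∂μ = M ^ 2 * J - 2 * M * I * I + I ^ 2 * M := by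
      have h1 : Integrable (fun t => M ^ 2 * f t ^ 2) μ := hf2.const_mul _
      have h2 : Integrable (fun t => 2 * M * I * f t) μ := hf.const_mul _
      have h3 : Integrable (fun t => (I : ℝ) ^ 2) μ := integrable_const _
      calc ∫ t, (M * f t - I) ^ 2 ∂μ
          = ∫ t, (M ^ 2 * f t ^ 2 - 2 * M * I * f t + I ^ 2) ∂μ := by
            congr 1; ext t; ring
        _ = ∫ t, (M ^ 2 * f t ^ 2 - 2 * M * I * f t) ∂μ + ∫ t, (I : ℝ) ^ 2 ∂μ :=
            integral_add (h1.sub h2) h3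
        _ = (∫ t, M ^ 2 * f t ^ 2 ∂μ - ∫ t, 2 * M * I * f t ∂μ) + ∫ t, (I : ℝ) ^ 2 ∂μ := by
            rw [integral_sub h1 h2]
        _ = (M ^ 2 * J - 2 * M * I * I) + I ^ 2 * M := by
            rw [integral_const_mul, integral_const_mul, integral_const]
            simp [hI, hJ, hM, smul_eq_mul, mul_comm, Measure.real]
    rw [expand] at key
    have : 0 ≤ M * (M * J - I ^ 2) := by nlinarith
    nlinarith

/-- For `g ∈ C¹([0,1])` with `g(0)=0`,
`∫₀¹ |g(r)|² dr ≤ (1/2) ∫₀¹ |g'(r)|² (1 − r²) dr`. -/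
theorem stmt2 (g : ℝ → ℝ) (hg : ContDiff ℝ 1 g) (h0 : g 0 = 0) :
    (∫ r in Ioo (0:ℝ) 1, |g r| ^ 2)
      ≤ (1 / 2) * ∫ r in Ioo (0:ℝ) 1, |deriv g r| ^ 2 * (1 - r ^ 2) := by
  set f := deriv g with hf
  have hfc : Continuous f := hg.continuous_deriv le_rfl
  have hgc : Continuous g := hg.continuous
  have hgd : Differentiable ℝ g := hg.differentiable one_ne_zero
  -- F r = ∫ t in 0..r, f t ^ 2
  set F : ℝ → ℝ := fun r => ∫ t in (0:ℝ)..r, f t ^ 2 with hF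
  have hf2c : Continuous fun t => f t ^ 2 := hfc.pow 2
  have hFd : ∀ x : ℝ, HasDerivAt F (f x ^ 2) x := fun x =>
    (hf2c.integral_hasStrictDerivAt 0 x).hasDerivAt
  have hFc : Continuous F :=
    continuous_iff_continuousAt.mpr fun x => (hFd x).continuousAt
  -- pointwise bound
  have hpt : ∀ r ∈ Icc (0:ℝ) 1, g r ^ 2 ≤ r * F r := by
    intro r hr
    have hr0 : (0:ℝ) ≤ r := hr.1
    have hgr : g r = ∫ t in (0:ℝ)..r, f t := by
      rw [intervalIntegral.integral_deriv_eq_sub (fun x _ => hgd x)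
        (hfc.intervalIntegrable 0 r), h0, sub_zero]
    have hrest : (volume.restrict (Ioc (0:ℝ) r) univ).toReal = r := by
      rw [Measure.restrict_apply_univ, Real.volume_Ioc, sub_zero,
        ENNReal.toReal_ofReal (by linarith)]
    have := cs_int (μ := volume.restrict (Ioc (0:ℝ) r))
      hfc.integrableOn_Ioc hf2c.integrableOn_Ioc
    rw [hrest] at this
    rw [hgr, intervalIntegral.integral_of_le hr0, hF]
    simpa [intervalIntegral.integral_of_le hr0] using this
  -- integration by parts
  have hv : ∀ x ∈ uIcc (0:ℝ) 1, HasDerivAt (fun r : ℝ => r ^ 2 / 2) x x := by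
    intro x _
    simpa using ((hasDerivAt_pow 2 x).div_const 2)
  have hu : ∀ x ∈ uIcc (0:ℝ) 1, HasDerivAt F (f x ^ 2) x := fun x _ => hFd x
  have parts : ∫ x in (0:ℝ)..1, F x * x
      = F 1 * (1 / 2) - ∫ x in (0:ℝ)..1, f x ^ 2 * (x ^ 2 / 2) := by
    have := intervalIntegral.integral_mul_deriv_eq_deriv_mul hu hv
      (hf2c.intervalIntegrable 0 1) (continuous_id.intervalIntegrable 0 1)
    simp only [hF, intervalIntegral.integral_same] at this ⊢
    rw [this]
    norm_num
  -- integrabilities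
  have hint1 : IntervalIntegrable (fun r => g r ^ 2) volume 0 1 :=
    (hgc.pow 2).intervalIntegrable 0 1
  have hint2 : IntervalIntegrable (fun r => r * F r) volume 0 1 :=
    (continuous_id.mul hFc).intervalIntegrable 0 1
  have hmono : ∫ r in (0:ℝ)..1, g r ^ 2 ≤ ∫ r in (0:ℝ)..1, r * F r :=
    intervalIntegral.integral_mono_on (by norm_num) hint1 hint2 hpt
  have hsplit : ∫ r in (0:ℝ)..1, f r ^ 2 * (1 - r ^ 2)
      = F 1 - ∫ r in (0:ℝ)..1, f r ^ 2 * r ^ 2 := by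
    have h1 : IntervalIntegrable (fun r => f r ^ 2) volume 0 1 :=
      hf2c.intervalIntegrable 0 1
    have h2 : IntervalIntegrable (fun r => f r ^ 2 * r ^ 2) volume 0 1 :=
      (hf2c.mul (continuous_pow 2)).intervalIntegrable 0 1
    rw [hF]
    rw [show (fun r => f r ^ 2 * (1 - r ^ 2)) = fun r => f r ^ 2 - f r ^ 2 * r ^ 2 by
      ext r; ring] at *
    exact intervalIntegral.integral_sub h1 h2
  have hfin : ∫ r in (0:ℝ)..1, g r ^ 2
      ≤ (1 / 2) * ∫ r in (0:ℝ)..1, f r ^ 2 * (1 - r ^ 2) := by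
    have hflip : ∫ x in (0:ℝ)..1, F x * x = ∫ x in (0:ℝ)..1, x * F x := by
      congr 1; ext x; ring
    have hhalf : ∫ x in (0:ℝ)..1, f x ^ 2 * (x ^ 2 / 2)
        = (1 / 2) * ∫ x in (0:ℝ)..1, f x ^ 2 * x ^ 2 := by
      rw [← intervalIntegral.integral_const_mul]
      congr 1; ext x; ring
    calc ∫ r in (0:ℝ)..1, g r ^ 2 ≤ ∫ r in (0:ℝ)..1, r * F r := hmono
      _ = F 1 * (1 / 2) - (1 / 2) * ∫ x in (0:ℝ)..1, f x ^ 2 * x ^ 2 := by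
          rw [← hflip, parts, hhalf]
      _ = (1 / 2) * ∫ r in (0:ℝ)..1, f r ^ 2 * (1 - r ^ 2) := by
          rw [hsplit]; ring
  -- convert set integrals
  have e1 : (∫ r in Ioo (0:ℝ) 1, |g r| ^ 2) = ∫ r in (0:ℝ)..1, g r ^ 2 := by
    rw [intervalIntegral.integral_of_le (by norm_num : (0:ℝ) ≤ 1),
      ← integral_Ioc_eq_integral_Ioo]
    simp [sq_abs]
  have e2 : (∫ r in Ioo (0:ℝ) 1, |deriv g r| ^ 2 * (1 - r ^ 2))
      = ∫ r in (0:ℝ)..1, f r ^ 2 * (1 - r ^ 2) := by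
    rw [intervalIntegral.integral_of_le (by norm_num : (0:ℝ) ≤ 1),
      ← integral_Ioc_eq_integral_Ioo]
    simp [sq_abs, hf]
  rw [e1, e2]
  exact hfin
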